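/- arXiv:2303.09251 — 2 statements merged into one kernel-verified Lean document; each statement's English description precedes it below -/
import Mathlib

section
/- Let σ ∈ S_n and A = {i₁ < … < i_k} ⊆ {1,…,n−1} with σ⁻¹(i_k) < … < σ⁻¹(i₁) < σ⁻¹(n). Define A^σ = {1 ≤ j < n : ∃ i ∈ A, i ≤ j and σ⁻¹(i) ≤ σ⁻¹(j) ≤ σ⁻¹(n)} and σ^A = (i₁,…,i_k,n)·σ (cycle notation). Then ℓ(σ^A) − ℓ(σ) = 2|A^σ| − |A|, where ℓ counts inversions. -/
/-- The number of inversions of a permutation. -/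
def permLen {n : ℕ} (σ : Equiv.Perm (Fin n)) : ℕ :=
  (Finset.univ.filter (fun p : Fin n × Fin n => p.1 < p.2 ∧ σ p.2 < σ p.1)).card

/-- The product `t_{i_k}⋯t_{i_1}·σ = (i₁,…,i_k,n)·σ`, where `t_i = (i, n)`. -/
def chainProd {n k : ℕ} (σ : Equiv.Perm (Fin (n + 1))) (i : Fin k → Fin (n + 1))
    (m : ℕ) : Equiv.Perm (Fin (n + 1)) :=
  (((List.ofFn fun j => Equiv.swap (i j) (Fin.last n)).take m).reverse).prod * σ

open Finset Equiv
open scoped Classical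

lemma permLen_int {n : ℕ} (τ : Equiv.Perm (Fin n)) :
    (permLen τ : ℤ) = ∑ p : Fin n, ∑ q : Fin n,
      (if p < q ∧ τ q < τ p then (1:ℤ) else 0) := by
  rw [permLen, Finset.card_filter, ← Finset.univ_product_univ, Finset.sum_product]
  push_cast
  rfl

set_option maxHeartbeats 1600000 in
lemma arith_pointwise (X A LL RX RA RL : ℕ) (h3 : X < LL) (h5 : RA < RL)
    (h6 : X ≠ A) (hne1 : RX ≠ RA) (hne2 : RX ≠ RL) :
    ((if X < A ∧ RL < RX then (1:ℤ) else 0) - (if X < LL ∧ RL < RX then 1 else 0))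
    + ((if X < LL ∧ RA < RX then 1 else 0) - (if X < A ∧ RA < RX then 1 else 0))
    + ((if A < X ∧ RX < RL then 1 else 0) - (if LL < X ∧ RX < RL then 1 else 0))
    + ((if LL < X ∧ RX < RA then 1 else 0) - (if A < X ∧ RX < RA then 1 else 0))
    = 2 * (if A < X ∧ X < LL ∧ RA < RX ∧ RX < RL then 1 else 0) := by
  have h7 : ¬ LL < X := not_lt.2 (le_of_lt h3)
  simp only [h3, h7, true_and, false_and, if_true, if_false]
  split_ifs <;> omega

private def gdiff {n : ℕ} (ρ : Equiv.Perm (Fin (n+1))) (a p q : Fin (n+1)) : ℤ :=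
  (if Equiv.swap a (Fin.last n) p < Equiv.swap a (Fin.last n) q ∧ ρ q < ρ p then (1:ℤ) else 0)
    - (if p < q ∧ ρ q < ρ p then (1:ℤ) else 0)

lemma key_right {n : ℕ} (ρ : Equiv.Perm (Fin (n+1))) (a : Fin (n+1))
    (ha : a < Fin.last n) (hρ : ρ a < ρ (Fin.last n)) :
    permLen (ρ * Equiv.swap a (Fin.last n)) = permLen ρ + 1 +
      2 * (Finset.univ.filter (fun x : Fin (n+1) => a < x ∧ x < Fin.last n ∧
        ρ a < ρ x ∧ ρ x < ρ (Fin.last n))).card := by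
  have hal : a ≠ Fin.last n := ne_of_lt ha
  set E : Finset (Fin (n+1)) := (Finset.univ.erase a).erase (Fin.last n) with hEdef
  have hmemE : ∀ x ∈ E, x ≠ a ∧ x ≠ Fin.last n := by
    intro x hx
    rw [hEdef, Finset.mem_erase, Finset.mem_erase] at hx
    exact ⟨hx.2.1, hx.1⟩
  have split : ∀ F : Fin (n+1) → ℤ, ∑ x, F x = ∑ x ∈ E, F x + F (Fin.last n) + F a := by
    intro F
    have h1 : ∑ x ∈ Finset.univ.erase a, F x + F a = ∑ x, F x :=
      Finset.sum_erase_add _ _ (Finset.mem_univ a)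
    have h2 : ∑ x ∈ E, F x + F (Fin.last n) = ∑ x ∈ Finset.univ.erase a, F x :=
      Finset.sum_erase_add _ _ (Finset.mem_erase.2 ⟨Ne.symm hal, Finset.mem_univ _⟩)
    rw [← h1, ← h2]
  have hsa : Equiv.swap a (Fin.last n) a = Fin.last n := Equiv.swap_apply_left a (Fin.last n)
  have hsL : Equiv.swap a (Fin.last n) (Fin.last n) = a := Equiv.swap_apply_right a (Fin.last n)
  have hsx : ∀ x : Fin (n+1), x ≠ a → x ≠ Fin.last n → Equiv.swap a (Fin.last n) x = x :=
    fun x h1 h2 => Equiv.swap_apply_of_ne_of_ne h1 h2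
  have hg0 : ∀ p q, p ≠ a → p ≠ Fin.last n → q ≠ a → q ≠ Fin.last n → gdiff ρ a p q = 0 := by
    intro p q h1 h2 h3 h4
    unfold gdiff
    rw [hsx p h1 h2, hsx q h3 h4]
    ring
  have hgaa : gdiff ρ a a a = 0 := by unfold gdiff; simp
  have hgLL : gdiff ρ a (Fin.last n) (Fin.last n) = 0 := by unfold gdiff; simp
  have hgaL : gdiff ρ a a (Fin.last n) = 0 := by
    unfold gdiff
    have : ¬ (ρ (Fin.last n) < ρ a) := not_lt.2 (le_of_lt hρ)
    simp [this]
  have hgLa : gdiff ρ a (Fin.last n) a = 1 := by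
    unfold gdiff
    rw [hsL, hsa, if_pos ⟨ha, hρ⟩, if_neg]
    · ring
    · rintro ⟨h, -⟩; exact absurd h (not_lt.2 (le_of_lt ha))
  have hpt : ∀ x, x ≠ a → x ≠ Fin.last n →
      gdiff ρ a x (Fin.last n) + gdiff ρ a x a + gdiff ρ a (Fin.last n) x + gdiff ρ a a x =
        2 * (if a < x ∧ x < Fin.last n ∧ ρ a < ρ x ∧ ρ x < ρ (Fin.last n) then (1:ℤ) else 0) := by
    intro x hxa hxL
    unfold gdiff
    rw [hsx x hxa hxL, hsL, hsa]
    have hxlt : x < Fin.last n := lt_of_le_of_ne (Fin.le_last x) hxL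
    have hne1 : (ρ x).val ≠ (ρ a).val := by
      intro h; exact hxa (ρ.injective (Fin.val_injective h))
    have hne2 : (ρ x).val ≠ (ρ (Fin.last n)).val := by
      intro h; exact hxL (ρ.injective (Fin.val_injective h))
    have h6 : (x:ℕ) ≠ (a:ℕ) := fun h => hxa (Fin.val_injective h)
    simp only [Fin.lt_def]
    exact arith_pointwise x.val a.val (Fin.last n).val (ρ x).val (ρ a).val (ρ (Fin.last n)).val
      hxlt hρ h6 hne1 hne2
  have hsum : ∑ p, ∑ q, gdiff ρ a p q = 1 +
      2 * ∑ x, (if a < x ∧ x < Fin.last n ∧ ρ a < ρ x ∧ ρ x < ρ (Fin.last n) then (1:ℤ) else 0) := by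
    rw [split (fun p => ∑ q, gdiff ρ a p q)]
    have inner : ∀ p, ∑ q, gdiff ρ a p q =
        ∑ q ∈ E, gdiff ρ a p q + gdiff ρ a p (Fin.last n) + gdiff ρ a p a :=
      fun p => split _
    rw [inner (Fin.last n), inner a]
    have hpE : ∑ p ∈ E, ∑ q, gdiff ρ a p q = ∑ p ∈ E, (gdiff ρ a p (Fin.last n) + gdiff ρ a p a) := by
      apply Finset.sum_congr rfl
      intro p hp
      rw [inner p]
      have hz : ∑ q ∈ E, gdiff ρ a p q = 0 := by
        apply Finset.sum_eq_zero
        intro q hq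
        exact hg0 p q (hmemE p hp).1 (hmemE p hp).2 (hmemE q hq).1 (hmemE q hq).2
      rw [hz]; ring
    rw [hpE, hgaa, hgLL, hgaL, hgLa]
    have hcomb : ∀ x ∈ E, gdiff ρ a x (Fin.last n) + gdiff ρ a x a + (gdiff ρ a (Fin.last n) x + gdiff ρ a a x) =
        2 * (if a < x ∧ x < Fin.last n ∧ ρ a < ρ x ∧ ρ x < ρ (Fin.last n) then (1:ℤ) else 0) := by
      intro x hx
      have := hpt x (hmemE x hx).1 (hmemE x hx).2
      linarith [this]
    have hback : ∑ x, (if a < x ∧ x < Fin.last n ∧ ρ a < ρ x ∧ ρ x < ρ (Fin.last n) then (1:ℤ) else 0) =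
        ∑ x ∈ E, (if a < x ∧ x < Fin.last n ∧ ρ a < ρ x ∧ ρ x < ρ (Fin.last n) then (1:ℤ) else 0) := by
      rw [split (fun x => if a < x ∧ x < Fin.last n ∧ ρ a < ρ x ∧ ρ x < ρ (Fin.last n) then (1:ℤ) else 0)]
      simp
    rw [hback]
    have hdist : ∑ x ∈ E, (gdiff ρ a x (Fin.last n) + gdiff ρ a x a) +
        (∑ q ∈ E, gdiff ρ a (Fin.last n) q + ∑ q ∈ E, gdiff ρ a a q) =
        ∑ x ∈ E, 2 * (if a < x ∧ x < Fin.last n ∧ ρ a < ρ x ∧ ρ x < ρ (Fin.last n) then (1:ℤ) else 0) := by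
      rw [← Finset.sum_add_distrib, ← Finset.sum_add_distrib]
      exact Finset.sum_congr rfl hcomb
    rw [Finset.mul_sum]
    linarith [hdist]
  have hL : (permLen (ρ * Equiv.swap a (Fin.last n)) : ℤ) = ∑ p, ∑ q,
      (if Equiv.swap a (Fin.last n) p < Equiv.swap a (Fin.last n) q ∧ ρ q < ρ p then (1:ℤ) else 0) := by
    rw [permLen_int]
    rw [← Equiv.sum_comp (Equiv.swap a (Fin.last n))
      (fun p => ∑ q, (if p < q ∧ (ρ * Equiv.swap a (Fin.last n)) q < (ρ * Equiv.swap a (Fin.last n)) p then (1:ℤ) else 0))]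
    apply Finset.sum_congr rfl
    intro p _
    rw [← Equiv.sum_comp (Equiv.swap a (Fin.last n))
      (fun q => (if Equiv.swap a (Fin.last n) p < q ∧ (ρ * Equiv.swap a (Fin.last n)) q < (ρ * Equiv.swap a (Fin.last n)) (Equiv.swap a (Fin.last n) p) then (1:ℤ) else 0))]
    apply Finset.sum_congr rfl
    intro q _
    simp [Equiv.Perm.mul_apply]
  have hfin : (permLen (ρ * Equiv.swap a (Fin.last n)) : ℤ) = (permLen ρ : ℤ) + 1 +
      2 * ((Finset.univ.filter (fun x : Fin (n+1) => a < x ∧ x < Fin.last n ∧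
        ρ a < ρ x ∧ ρ x < ρ (Fin.last n))).card : ℤ) := by
    have hsub : ∑ p, ∑ q, gdiff ρ a p q =
        (∑ p, ∑ q, (if Equiv.swap a (Fin.last n) p < Equiv.swap a (Fin.last n) q ∧ ρ q < ρ p then (1:ℤ) else 0)) -
        (∑ p, ∑ q, (if p < q ∧ ρ q < ρ p then (1:ℤ) else 0)) := by
      rw [← Finset.sum_sub_distrib]
      apply Finset.sum_congr rfl
      intro p _
      rw [← Finset.sum_sub_distrib]
      rfl
    have hC : ((Finset.univ.filter (fun x : Fin (n+1) => a < x ∧ x < Fin.last n ∧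
        ρ a < ρ x ∧ ρ x < ρ (Fin.last n))).card : ℤ) =
        ∑ x, (if a < x ∧ x < Fin.last n ∧ ρ a < ρ x ∧ ρ x < ρ (Fin.last n) then (1:ℤ) else 0) := by
      rw [Finset.card_filter]
      push_cast
      rfl
    rw [hL, hC, permLen_int ρ]
    linarith [hsum, hsub]
  exact_mod_cast hfin

lemma permLen_inv {n : ℕ} (τ : Equiv.Perm (Fin n)) :
    permLen τ⁻¹ = permLen τ := by
  unfold permLen
  apply Finset.card_bij' (fun p _ => (τ⁻¹ p.2, τ⁻¹ p.1)) (fun p _ => (τ p.2, τ p.1))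
  · intro p hp
    simp only [mem_filter, mem_univ, true_and] at hp ⊢
    exact ⟨hp.2, by simpa using hp.1⟩
  · intro p hp
    simp only [mem_filter, mem_univ, true_and] at hp ⊢
    exact ⟨hp.2, by simpa using hp.1⟩
  · intro p hp; simp
  · intro p hp; simp

lemma key_left' {n : ℕ} (π : Equiv.Perm (Fin (n+1))) (a : Fin (n+1))
    (ha : a < Fin.last n) (hπ : π⁻¹ a < π⁻¹ (Fin.last n)) :
    permLen (Equiv.swap a (Fin.last n) * π) = permLen π + 1 +
      2 * (Finset.univ.filter (fun x : Fin (n+1) => a < x ∧ x < Fin.last n ∧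
        π⁻¹ a < π⁻¹ x ∧ π⁻¹ x < π⁻¹ (Fin.last n))).card := by
  rw [← permLen_inv (Equiv.swap a (Fin.last n) * π), ← permLen_inv π]
  rw [mul_inv_rev, Equiv.swap_inv]
  exact key_right π⁻¹ a ha hπ

lemma chainProd_succ' {n k : ℕ} (σ : Equiv.Perm (Fin (n + 1))) (i : Fin (k+1) → Fin (n + 1)) :
    chainProd σ i (k+1) =
      chainProd (Equiv.swap (i 0) (Fin.last n) * σ) (fun j : Fin k => i j.succ) k := by
  unfold chainProd
  rw [List.take_of_length_le (by simp), List.take_of_length_le (by simp)]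
  rw [List.ofFn_succ]
  simp [List.prod_append, mul_assoc]

theorem aux : ∀ (k : ℕ) {n : ℕ} (σ : Equiv.Perm (Fin (n + 1))) (i : Fin k → Fin (n + 1)),
    StrictMono i → (∀ j, i j < Fin.last n) →
    (∀ a b : Fin k, a < b → σ⁻¹ (i b) < σ⁻¹ (i a)) →
    (∀ a : Fin k, σ⁻¹ (i a) < σ⁻¹ (Fin.last n)) →
    permLen (chainProd σ i k) + k =
      permLen σ +
        2 * (Finset.univ.filter (fun j : Fin (n + 1) => j < Fin.last n ∧
          ∃ m : Fin k, i m ≤ j ∧ σ⁻¹ (i m) ≤ σ⁻¹ j ∧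
            σ⁻¹ j ≤ σ⁻¹ (Fin.last n))).card := by
  intro k
  induction k with
  | zero =>
    intro n σ i _ _ _ _
    have h0 : chainProd σ i 0 = σ := by
      unfold chainProd; simp
    rw [h0]
    simp
  | succ k ih =>
    intro n σ i hmono hlt hdec hlast
    set σ' : Equiv.Perm (Fin (n+1)) := Equiv.swap (i 0) (Fin.last n) * σ with hσ'
    set i' : Fin k → Fin (n+1) := fun j => i j.succ with hi'
    -- inverse facts
    have hinv : ∀ x, σ'⁻¹ x = σ⁻¹ (Equiv.swap (i 0) (Fin.last n) x) := by
      intro x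
      rw [hσ', mul_inv_rev, Equiv.swap_inv, Equiv.Perm.mul_apply]
    have hinv_last : σ'⁻¹ (Fin.last n) = σ⁻¹ (i 0) := by
      rw [hinv, Equiv.swap_apply_right]
    have hinv_other : ∀ x, x ≠ i 0 → x ≠ Fin.last n → σ'⁻¹ x = σ⁻¹ x := by
      intro x h1 h2
      rw [hinv, Equiv.swap_apply_of_ne_of_ne h1 h2]
    have hne_i0 : ∀ j : Fin k, i j.succ ≠ i 0 :=
      fun j => ne_of_gt (hmono (Fin.succ_pos j))
    have hne_last : ∀ j : Fin (k+1), i j ≠ Fin.last n := fun j => ne_of_lt (hlt j)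
    have hinv_i' : ∀ j : Fin k, σ'⁻¹ (i' j) = σ⁻¹ (i j.succ) := by
      intro j
      exact hinv_other _ (hne_i0 j) (hne_last j.succ)
    -- IH application
    have hIH := ih σ' i'
      (fun a b hab => hmono (by simpa using hab))
      (fun j => hlt j.succ)
      (by
        intro a b hab
        rw [hinv_i', hinv_i']
        exact hdec a.succ b.succ (by simpa using hab))
      (by
        intro a
        rw [hinv_i', hinv_last]
        exact hdec 0 a.succ (Fin.succ_pos a))
    -- key lemma
    have hkey := key_left' σ (i 0) (hlt 0) (hlast 0)
    rw [← hσ'] at hkey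
    -- chainProd step
    have hstep : chainProd σ i (k+1) = chainProd σ' i' k := chainProd_succ' σ i
    -- the set identity
    have hiff : ∀ j : Fin (n+1),
        (j < Fin.last n ∧ ∃ m : Fin (k+1), i m ≤ j ∧ σ⁻¹ (i m) ≤ σ⁻¹ j ∧
          σ⁻¹ j ≤ σ⁻¹ (Fin.last n)) ↔
        (j = i 0 ∨ ((j < Fin.last n ∧ ∃ m : Fin k, i' m ≤ j ∧ σ'⁻¹ (i' m) ≤ σ'⁻¹ j ∧
            σ'⁻¹ j ≤ σ'⁻¹ (Fin.last n)) ∨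
          (i 0 < j ∧ j < Fin.last n ∧ σ⁻¹ (i 0) < σ⁻¹ j ∧ σ⁻¹ j < σ⁻¹ (Fin.last n)))) := by
      intro j
      constructor
      · rintro ⟨hjl, m, him, h1, h2⟩
        by_cases hj0 : j = i 0
        · exact Or.inl hj0
        have hjlast : j ≠ Fin.last n := ne_of_lt hjl
        have hσj : σ'⁻¹ j = σ⁻¹ j := hinv_other j hj0 hjlast
        by_cases hcase : σ⁻¹ j ≤ σ⁻¹ (i 0)
        · -- goes to P1'
          have hm0 : m ≠ 0 := by
            intro h
            subst h
            have : σ⁻¹ (i 0) = σ⁻¹ j := le_antisymm h1 hcase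
            exact hj0 (σ⁻¹.injective this).symm
          obtain ⟨m', rfl⟩ := Fin.eq_succ_of_ne_zero hm0
          refine Or.inr (Or.inl ⟨hjl, m', ?_, ?_, ?_⟩)
          · exact him
          · rw [hinv_i', hσj]; exact h1
          · rw [hσj, hinv_last]; exact hcase
        · -- goes to P2
          push_neg at hcase
          refine Or.inr (Or.inr ⟨?_, hjl, hcase, ?_⟩)
          · exact lt_of_le_of_ne (le_trans (hmono.monotone (Fin.zero_le m)) him)
              (Ne.symm hj0)
          · exact lt_of_le_of_ne h2 (fun h => hjlast (σ⁻¹.injective h))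
      · rintro (rfl | ⟨hjl, m, h0, h1, h2⟩ | ⟨h0, hjl, h1, h2⟩)
        · exact ⟨hlt 0, 0, le_refl _, le_refl _, le_of_lt (hlast 0)⟩
        · have hj0 : j ≠ i 0 := by
            intro h
            rw [h] at h0
            exact absurd h0 (not_le.2 (hmono (Fin.succ_pos m)))
          have hjlast : j ≠ Fin.last n := ne_of_lt hjl
          have hσj : σ'⁻¹ j = σ⁻¹ j := hinv_other j hj0 hjlast
          rw [hinv_i', hσj] at h1
          rw [hσj, hinv_last] at h2
          exact ⟨hjl, m.succ, h0, h1, le_trans h2 (le_of_lt (hlast 0))⟩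
        · exact ⟨hjl, 0, le_of_lt h0, le_of_lt h1, le_of_lt h2⟩
    -- card identity
    have hset : (Finset.univ.filter (fun j : Fin (n + 1) => j < Fin.last n ∧
          ∃ m : Fin (k+1), i m ≤ j ∧ σ⁻¹ (i m) ≤ σ⁻¹ j ∧ σ⁻¹ j ≤ σ⁻¹ (Fin.last n))) =
        insert (i 0)
          ((Finset.univ.filter (fun j : Fin (n + 1) => j < Fin.last n ∧
            ∃ m : Fin k, i' m ≤ j ∧ σ'⁻¹ (i' m) ≤ σ'⁻¹ j ∧ σ'⁻¹ j ≤ σ'⁻¹ (Fin.last n))) ∪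
           (Finset.univ.filter (fun x : Fin (n+1) => i 0 < x ∧ x < Fin.last n ∧
            σ⁻¹ (i 0) < σ⁻¹ x ∧ σ⁻¹ x < σ⁻¹ (Fin.last n)))) := by
      ext j
      simp only [Finset.mem_filter, Finset.mem_univ, true_and, Finset.mem_insert,
        Finset.mem_union]
      exact hiff j
    have hd1 : i 0 ∉ ((Finset.univ.filter (fun j : Fin (n + 1) => j < Fin.last n ∧
            ∃ m : Fin k, i' m ≤ j ∧ σ'⁻¹ (i' m) ≤ σ'⁻¹ j ∧ σ'⁻¹ j ≤ σ'⁻¹ (Fin.last n))) ∪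
           (Finset.univ.filter (fun x : Fin (n+1) => i 0 < x ∧ x < Fin.last n ∧
            σ⁻¹ (i 0) < σ⁻¹ x ∧ σ⁻¹ x < σ⁻¹ (Fin.last n)))) := by
      simp only [Finset.mem_union, Finset.mem_filter, Finset.mem_univ, true_and]
      rintro (⟨-, m, h0, -⟩ | ⟨h0, -⟩)
      · exact absurd h0 (not_le.2 (hmono (Fin.succ_pos m)))
      · exact lt_irrefl _ h0
    have hd2 : Disjoint (Finset.univ.filter (fun j : Fin (n + 1) => j < Fin.last n ∧
            ∃ m : Fin k, i' m ≤ j ∧ σ'⁻¹ (i' m) ≤ σ'⁻¹ j ∧ σ'⁻¹ j ≤ σ'⁻¹ (Fin.last n)))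
          (Finset.univ.filter (fun x : Fin (n+1) => i 0 < x ∧ x < Fin.last n ∧
            σ⁻¹ (i 0) < σ⁻¹ x ∧ σ⁻¹ x < σ⁻¹ (Fin.last n))) := by
      rw [Finset.disjoint_left]
      intro j hj1 hj2
      simp only [Finset.mem_filter, Finset.mem_univ, true_and] at hj1 hj2
      obtain ⟨hjl, m, h0, h1, h2⟩ := hj1
      obtain ⟨g0, g1, g2, g3⟩ := hj2
      have hσj : σ'⁻¹ j = σ⁻¹ j := hinv_other j (ne_of_gt g0) (ne_of_lt g1)
      rw [hσj, hinv_last] at h2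
      exact absurd g2 (not_lt.2 h2)
    rw [hstep, hset, Finset.card_insert_of_notMem hd1, Finset.card_union_of_disjoint hd2]
    omega


open scoped Classical in
/-- for `A = {i₁ < … < i_k}` with
`σ⁻¹(i_k) < … < σ⁻¹(i₁) < σ⁻¹(n)`, setting
`A^σ = {j < n : ∃ i ∈ A, i ≤ j, σ⁻¹(i) ≤ σ⁻¹(j) ≤ σ⁻¹(n)}` and
`σ^A = (i₁,…,i_k,n)·σ`, one has `ℓ(σ^A) − ℓ(σ) = 2|A^σ| − |A|`
(stated additively as `ℓ(σ^A) + |A| = ℓ(σ) + 2|A^σ|`). -/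
theorem stmt_11 {n k : ℕ} (σ : Equiv.Perm (Fin (n + 1)))
    (i : Fin k → Fin (n + 1)) (hmono : StrictMono i)
    (hlt : ∀ j, i j < Fin.last n)
    (hdec : ∀ a b : Fin k, a < b → σ⁻¹ (i b) < σ⁻¹ (i a))
    (hlast : ∀ a : Fin k, σ⁻¹ (i a) < σ⁻¹ (Fin.last n)) :
    permLen (chainProd σ i k) + k =
      permLen σ +
        2 * (Finset.univ.filter (fun j : Fin (n + 1) => j < Fin.last n ∧
          ∃ m : Fin k, i m ≤ j ∧ σ⁻¹ (i m) ≤ σ⁻¹ j ∧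
            σ⁻¹ j ≤ σ⁻¹ (Fin.last n))).card := by
  exact aux k σ i hmono hlt hdec hlast
end

section
/- Let σ ∈ S_n, j ∈ 𝒟(σ), and i ∈ 𝒟(σ) with i < j and σ⁻¹(i) < σ⁻¹(j) < σ⁻¹(n). Then (j,n)·σ < (i,n)·σ in the Bruhat order on S_n. -/
/-- The Bruhat order on the symmetric group. -/
def permBruhatLE {n : ℕ} (u v : Equiv.Perm (Fin n)) : Prop :=
  Relation.ReflTransGen
    (fun x y => (∃ a b : Fin n, a ≠ b ∧ y = Equiv.swap a b * x) ∧
      permLen x < permLen y) u v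

/-- The strict Bruhat order. -/
def permBruhatLT {n : ℕ} (u v : Equiv.Perm (Fin n)) : Prop :=
  permBruhatLE u v ∧ u ≠ v

/-- Multiplying by a transposition `swap a b` with `a < b` and `u⁻¹ a < u⁻¹ b`
strictly increases the inversion number. -/
lemma permLen_lt_swap_mul {n : ℕ} (u : Equiv.Perm (Fin n)) (a b : Fin n)
    (hab : a < b) (hpos : u⁻¹ a < u⁻¹ b) :
    permLen u < permLen (Equiv.swap a b * u) := by
  set p : Fin n := u⁻¹ a with hp
  set q : Fin n := u⁻¹ b with hq
  have hup : u p = a := u.apply_symm_apply a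
  have huq : u q = b := u.apply_symm_apply b
  have hpq : p < q := hpos
  set s : Equiv.Perm (Fin n) := Equiv.swap p q with hs
  have hkey : ∀ z, (Equiv.swap a b * u) z = u (s z) := by
    intro z
    have : Equiv.swap a b = u * s * u⁻¹ := by
      rw [hs, ← hup, ← huq, Equiv.swap_apply_apply]
    simp [this, Equiv.Perm.mul_apply]
  set S := Finset.univ.filter (fun P : Fin n × Fin n => P.1 < P.2 ∧ u P.2 < u P.1) with hS
  set T := Finset.univ.filter
    (fun P : Fin n × Fin n => P.1 < P.2 ∧ (Equiv.swap a b * u) P.2 < (Equiv.swap a b * u) P.1)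
    with hT
  have hpqT : (p, q) ∈ T := by
    simp only [hT, Finset.mem_filter, Finset.mem_univ, true_and]
    refine ⟨hpq, ?_⟩
    rw [hkey, hkey]
    simp only [hs, Equiv.swap_apply_left, Equiv.swap_apply_right]
    rw [hup, huq]; exact hab
  -- the injection
  set f : Fin n × Fin n → Fin n × Fin n :=
    fun P => if s P.1 < s P.2 then (s P.1, s P.2) else P with hf
  have hss : ∀ z, s (s z) = z := fun z => Equiv.swap_apply_self _ _ _
  have hmaps : ∀ P ∈ S, f P ∈ T.erase (p, q) := by
    rintro ⟨x, y⟩ hP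
    simp only [hS, Finset.mem_filter, Finset.mem_univ, true_and] at hP
    obtain ⟨hxy, hinv⟩ := hP
    by_cases hcase : s x < s y
    · have hfP : f (x, y) = (s x, s y) := by simp [hf, hcase]
      rw [hfP]
      refine Finset.mem_erase.2 ⟨?_, ?_⟩
      · intro hcontra
        have h1 : s x = p := congrArg Prod.fst hcontra
        have h2 : s y = q := congrArg Prod.snd hcontra
        have hx : x = q := by rw [← hss x, h1, hs, Equiv.swap_apply_left]
        have hy : y = p := by rw [← hss y, h2, hs, Equiv.swap_apply_right]
        rw [hx, hy] at hxy
        exact absurd hxy (not_lt.2 hpq.le)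
      · simp only [hT, Finset.mem_filter, Finset.mem_univ, true_and]
        refine ⟨hcase, ?_⟩
        rw [hkey, hkey, hss, hss]; exact hinv
    · have hfP : f (x, y) = (x, y) := by simp [hf, hcase]
      rw [hfP]
      have hsne : s x ≠ s y := fun h => (hxy.ne (s.injective h)).elim
      have hslt : s y < s x := lt_of_le_of_ne (not_lt.1 hcase) hsne.symm
      -- case analysis on membership of x, y in {p, q}
      have hPne : (x, y) ≠ (p, q) := by
        intro hcontra
        have hx : x = p := congrArg Prod.fst hcontra
        have hy : y = q := congrArg Prod.snd hcontra
        rw [hx, hy, hup, huq] at hinv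
        exact absurd hab (not_lt.2 hinv.le)
      refine Finset.mem_erase.2 ⟨hPne, ?_⟩
      simp only [hT, Finset.mem_filter, Finset.mem_univ, true_and]
      refine ⟨hxy, ?_⟩
      rw [hkey, hkey]
      -- analyze positions
      by_cases hxp : x = p
      · -- then y ≠ q (else previous case), and s x = q, and we need y ∉ {p,q}
        have hyq : y ≠ q := fun h => hPne (by rw [hxp, h])
        have hyp : y ≠ p := fun h => (hxy.ne (hxp.trans h.symm)).elim
        have hsy : s y = y := Equiv.swap_apply_of_ne_of_ne hyp hyq
        have hsx : s x = q := by rw [hxp, hs, Equiv.swap_apply_left]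
        rw [hsx, hsy, huq]
        rw [hxp, hup] at hinv
        exact hinv.trans hab
      · by_cases hyq : y = q
        · have hxq : x ≠ q := fun h => (hxy.ne (h.trans hyq.symm)).elim
          have hsx : s x = x := Equiv.swap_apply_of_ne_of_ne hxp hxq
          have hsy : s y = p := by rw [hyq, hs, Equiv.swap_apply_right]
          rw [hsx, hsy, hup]
          rw [hyq, huq] at hinv
          exact hab.trans hinv
        · -- x ∉ {p}, y ∉ {q}; show contradiction with s y < s x
          exfalso
          by_cases hxq : x = q
          · have hsx : s x = p := by rw [hxq, hs, Equiv.swap_apply_right]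
            have hqy : q < y := hxq ▸ hxy
            have hyp : y ≠ p := fun h => lt_irrefl p (h ▸ (hpq.trans hqy))
            have hsy : s y = y := Equiv.swap_apply_of_ne_of_ne hyp hyq
            rw [hsx, hsy] at hslt
            exact absurd (hpq.trans hqy) (not_lt.2 hslt.le)
          · have hsx : s x = x := Equiv.swap_apply_of_ne_of_ne hxp hxq
            by_cases hyp : y = p
            · have hsy : s y = q := by rw [hyp, hs, Equiv.swap_apply_left]
              rw [hsx, hsy] at hslt
              exact absurd ((hyp ▸ hxy).trans hpq) (not_lt.2 hslt.le)
            · have hsy : s y = y := Equiv.swap_apply_of_ne_of_ne hyp hyq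
              rw [hsx, hsy] at hslt
              exact absurd hxy (not_lt.2 hslt.le)
  have hinj : Set.InjOn f S := by
    rintro ⟨x1, y1⟩ h1 ⟨x2, y2⟩ h2 heq
    simp only [hS, Finset.coe_filter, Set.mem_setOf_eq, Finset.mem_univ, true_and] at h1 h2
    by_cases c1 : s x1 < s y1 <;> by_cases c2 : s x2 < s y2 <;>
      simp only [hf, c1, c2, if_pos, if_neg, if_true, if_false] at heq
    · have e1 : s x1 = s x2 := congrArg Prod.fst heq
      have e2 : s y1 = s y2 := congrArg Prod.snd heq
      exact Prod.ext (s.injective e1) (s.injective e2)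
    · -- (s x1, s y1) = (x2, y2), with ¬ s x2 < s y2
      have e1 : s x1 = x2 := congrArg Prod.fst heq
      have e2 : s y1 = y2 := congrArg Prod.snd heq
      exfalso
      apply c2
      rw [← e1, ← e2, hss, hss]
      exact h1.1
    · have e1 : x1 = s x2 := congrArg Prod.fst heq
      have e2 : y1 = s y2 := congrArg Prod.snd heq
      exfalso
      apply c1
      rw [e1, e2, hss, hss]
      exact h2.1
    · exact heq
  have hle : S.card ≤ (T.erase (p, q)).card := Finset.card_le_card_of_injOn f hmaps hinj
  have : (T.erase (p, q)).card < T.card := Finset.card_erase_lt_of_mem hpqT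
  calc permLen u = S.card := rfl
    _ ≤ (T.erase (p, q)).card := hle
    _ < T.card := this
    _ = permLen (Equiv.swap a b * u) := rfl

/-- for `i < j` both in `𝒟(σ)` with `σ⁻¹(i) < σ⁻¹(j) < σ⁻¹(n)`,
one has `(j,n)·σ < (i,n)·σ` in Bruhat order. -/
theorem stmt_17 {n : ℕ} (σ : Equiv.Perm (Fin (n + 1))) (i j : Fin (n + 1))
    (hi : i < Fin.last n ∧ σ⁻¹ i < σ⁻¹ (Fin.last n))
    (hj : j < Fin.last n ∧ σ⁻¹ j < σ⁻¹ (Fin.last n))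
    (hij : i < j) (hinv : σ⁻¹ i < σ⁻¹ j) :
    permBruhatLT (Equiv.swap j (Fin.last n) * σ) (Equiv.swap i (Fin.last n) * σ) := by
  set N := Fin.last n with hN
  have hiN : i ≠ N := hi.1.ne
  have hjN : j ≠ N := hj.1.ne
  have hijne : i ≠ j := hij.ne
  set u := Equiv.swap j N * σ with hu
  set w := Equiv.swap i j * u with hw
  set v := Equiv.swap i N * σ with hv
  have hvw : v = Equiv.swap j N * w := by
    rw [hw, hu, ← mul_assoc, ← mul_assoc,
      Equiv.swap_mul_swap_mul_swap hijne hiN, Equiv.swap_comm]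
  -- inverse computations
  have huinv_i : u⁻¹ i = σ⁻¹ i := by
    rw [hu, mul_inv_rev, Equiv.swap_inv, Equiv.Perm.mul_apply,
      Equiv.swap_apply_of_ne_of_ne hijne hiN]
  have huinv_j : u⁻¹ j = σ⁻¹ N := by
    rw [hu, mul_inv_rev, Equiv.swap_inv, Equiv.Perm.mul_apply, Equiv.swap_apply_left]
  have huinv_N : u⁻¹ N = σ⁻¹ j := by
    rw [hu, mul_inv_rev, Equiv.swap_inv, Equiv.Perm.mul_apply, Equiv.swap_apply_right]
  have hwinv_j : w⁻¹ j = σ⁻¹ i := by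
    rw [hw, mul_inv_rev, Equiv.swap_inv, Equiv.Perm.mul_apply, Equiv.swap_apply_right, huinv_i]
  have hwinv_N : w⁻¹ N = σ⁻¹ j := by
    rw [hw, mul_inv_rev, Equiv.swap_inv, Equiv.Perm.mul_apply,
      Equiv.swap_apply_of_ne_of_ne hiN.symm hjN.symm, huinv_N]
  have h1 : permLen u < permLen w := by
    rw [hw]
    exact permLen_lt_swap_mul u i j hij (by rw [huinv_i, huinv_j]; exact hi.2)
  have h2 : permLen w < permLen v := by
    rw [hvw]
    exact permLen_lt_swap_mul w j N hj.1 (by rw [hwinv_j, hwinv_N]; exact hinv)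
  constructor
  · refine Relation.ReflTransGen.head ⟨⟨i, j, hijne, hw⟩, h1⟩ ?_
    exact Relation.ReflTransGen.single ⟨⟨j, N, hjN, hvw⟩, h2⟩
  · intro hcontra
    rw [hcontra] at h1
    exact absurd (h1.trans h2) (lt_irrefl _)
end
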